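/- Let T be a rooted tree with forward degrees ≥ 2 carrying a transient nearest neighbour random walk whose limit distribution ν_o is fully supported on ∂T and whose Green kernel vanishes at infinity. If an ultrametric element φ satisfies, for all ends ξ ≠ η, the identity 1/φ(o) + ∫_{1/φ(o)}^{1/φ(ξ∧η)} dt/ν_o(B_φ(ξ,1/t)) = 1/(G(o,o)F(o,ξ∧η)F(ξ∧η,o)), then φ(x) = G(x,o) for all x ∈ T. -/

import Mathlib

set_option linter.unusedSectionVars false
set_option linter.unusedVariables false


open Filter MeasureTheory
open scoped ENNReal

variable {V : Type*} [DecidableEq V]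

/-- The ends of a rooted tree, realised as geodesic rays from the root. -/
def Ends (root : V) (par : V → V) : Type _ :=
  {ξ : ℕ → V // ξ 0 = root ∧ ∀ n, par (ξ (n + 1)) = ξ n ∧ ξ (n + 1) ≠ ξ n}

instance (root : V) (par : V → V) : MeasurableSpace (Ends root par) := ⊤

/-- The confluent `ξ ∧ η` of two ends with respect to the root. -/
noncomputable def confl {root : V} {par : V → V} (ξ η : Ends root par) : V :=
  ξ.1 (sSup {n | ξ.1 n = η.1 n})

/-- `∂T_x` : the set of ends of the branch at `x`. -/
def branchEnds (root : V) (par : V → V) (x : V) : Set (Ends root par) :=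
  {ξ | ∃ n, ξ.1 n = x}

open Classical in
/-- The ultrametric `d_φ` on `∂T` induced by an ultrametric element `φ`. -/
noncomputable def dphi (root : V) (par : V → V) (φ : V → ℝ)
    (ξ η : Ends root par) : ℝ :=
  if ξ = η then 0 else φ (confl ξ η)

/-- Closed balls of the ultrametric `d_φ` on `∂T`. -/
def ballPhi (root : V) (par : V → V) (φ : V → ℝ) (ξ : Ends root par) (r : ℝ) :
    Set (Ends root par) :=
  {η | dphi root par φ η ξ ≤ r}

/-- Neighbourhood relation of the tree given by the predecessor map `par`. -/
def adjT (par : V → V) (x y : V) : Prop := x ≠ y ∧ (par x = y ∨ par y = x)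

/-- `pn p n x y` : `n`-step transition probabilities. -/
noncomputable def pn (p : V → V → ℝ≥0∞) : ℕ → V → V → ℝ≥0∞
  | 0 => fun x y => if x = y then 1 else 0
  | n + 1 => fun x y => ∑' z, p x z * pn p n z y

/-- The Green kernel `G(x,y) = Σ_{n≥0} p⁽ⁿ⁾(x,y)`. -/
noncomputable def Grn (p : V → V → ℝ≥0∞) (x y : V) : ℝ≥0∞ := ∑' n, pn p n x y

/-- `fn p n x y` : probability of first visit to `y` at time `n`, starting at `x`. -/
noncomputable def fn (p : V → V → ℝ≥0∞) : ℕ → V → V → ℝ≥0∞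
  | 0 => fun x y => if x = y then 1 else 0
  | n + 1 => fun x y => if x = y then 0 else ∑' z, p x z * fn p n z y

/-- `F(x,y)` : the probability of ever reaching `y` from `x`. -/
noncomputable def Fhit (p : V → V → ℝ≥0∞) (x y : V) : ℝ≥0∞ := ∑' n, fn p n x y

namespace S16

/-- The triangle `{(n,k) : k ≤ n}` parametrised by `ℕ × ℕ`. -/
def tri : (ℕ × ℕ) ≃ {q : ℕ × ℕ // q.2 ≤ q.1} :=
  ⟨fun q => ⟨(q.1 + q.2, q.1), by simp⟩, fun s => (s.1.2, s.1.1 - s.1.2),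
    fun q => by simp, fun s => by
      obtain ⟨⟨n, j⟩, h⟩ := s
      simp only [Set.mem_setOf_eq] at h
      exact Subtype.ext (by simp; omega)⟩

/-- Cauchy product for ℝ≥0∞ series. -/
lemma cauchy (f g : ℕ → ℝ≥0∞) :
    ∑' n, ∑ k ∈ Finset.range (n + 1), f k * g (n - k) = (∑' n, f n) * (∑' n, g n) := by
  have h1 : ∀ n : ℕ, ∑ k ∈ Finset.range (n + 1), f k * g (n - k)
      = ∑' k : ℕ, if k ≤ n then f k * g (n - k) else 0 := by
    intro n
    rw [tsum_eq_sum (s := Finset.range (n + 1)) (by intro k hk; rw [if_neg]; simp at hk; omega)]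
    refine Finset.sum_congr rfl fun k hk => ?_
    simp only [Finset.mem_range] at hk
    rw [if_pos (by omega)]
  simp_rw [h1]
  rw [show (∑' (n : ℕ) (k : ℕ), if k ≤ n then f k * g (n - k) else 0) = ∑' (q : ℕ × ℕ), (if q.2 ≤ q.1 then f q.2 * g (q.1 - q.2) else 0) from (ENNReal.tsum_prod' (f := fun q : ℕ × ℕ => if q.2 ≤ q.1 then f q.2 * g (q.1 - q.2) else 0)).symm]
  have key : ∑' (s : {q : ℕ × ℕ // q.2 ≤ q.1}), f s.1.2 * g (s.1.1 - s.1.2)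
      = ∑' (q : ℕ × ℕ), f q.1 * g q.2 := by
    refine (Equiv.tsum_eq tri (fun s => f s.1.2 * g (s.1.1 - s.1.2))).symm.trans
      (tsum_congr fun q => ?_)
    show f q.1 * g (q.1 + q.2 - q.1) = f q.1 * g q.2
    simp
  have h2 : ∑' (q : ℕ × ℕ), (if q.2 ≤ q.1 then f q.2 * g (q.1 - q.2) else 0)
      = ∑' (s : {q : ℕ × ℕ // q.2 ≤ q.1}), f s.1.2 * g (s.1.1 - s.1.2) := by
    rw [← tsum_subtype_eq_of_support_subset (s := {q : ℕ × ℕ | q.2 ≤ q.1})]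
    · exact tsum_congr fun s => if_pos s.2
    · intro q hq
      by_contra h
      simp only [Set.mem_setOf_eq] at h
      exact hq (if_neg h)
  rw [h2, key]
  rw [ENNReal.tsum_prod']
  simp_rw [ENNReal.tsum_mul_left]
  rw [ENNReal.tsum_mul_right]

lemma fn_succ (p : V → V → ℝ≥0∞) (n : ℕ) (x y : V) :
    fn p (n + 1) x y = if x = y then 0 else ∑' z, p x z * fn p n z y := rfl

lemma fn_zero (p : V → V → ℝ≥0∞) (x y : V) :
    fn p 0 x y = if x = y then 1 else 0 := rfl

lemma pn_succ (p : V → V → ℝ≥0∞) (n : ℕ) (x y : V) :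
    pn p (n + 1) x y = ∑' z, p x z * pn p n z y := rfl

lemma pn_zero (p : V → V → ℝ≥0∞) (x y : V) :
    pn p 0 x y = if x = y then 1 else 0 := rfl

lemma fn_self (p : V → V → ℝ≥0∞) (n : ℕ) (y : V) :
    fn p n y y = if n = 0 then 1 else 0 := by
  cases n with
  | zero => simp [fn_zero]
  | succ n => simp [fn_succ]

lemma Fhit_self (p : V → V → ℝ≥0∞) (y : V) : Fhit p y y = 1 := by
  rw [Fhit, tsum_eq_single 0 (by intro n hn; simp [fn_self, hn])]
  simp [fn_self]

/-- Renewal: `p⁽ⁿ⁾(x,y) = Σ_{k≤n} f⁽ᵏ⁾(x,y) p⁽ⁿ⁻ᵏ⁾(y,y)`. -/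
lemma pn_renewal (p : V → V → ℝ≥0∞) (y : V) :
    ∀ n x, pn p n x y = ∑ k ∈ Finset.range (n + 1), fn p k x y * pn p (n - k) y y := by
  intro n
  induction n with
  | zero =>
    intro x
    by_cases h : x = y <;> simp [pn_zero, fn_zero, h]
  | succ n ih =>
    intro x
    by_cases h : x = y
    · subst h
      rw [Finset.sum_range_succ' (fun k => fn p k x x * pn p (n + 1 - k) x x)]
      simp [fn_self, pn_succ]
    · rw [pn_succ]
      have step : ∀ z, p x z * pn p n z y
          = p x z * ∑ k ∈ Finset.range (n + 1), fn p k z y * pn p (n - k) y y := by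
        intro z; rw [ih z]
      simp_rw [step]
      rw [Finset.sum_range_succ' (fun k => fn p k x y * pn p (n + 1 - k) y y)]
      rw [fn_zero, if_neg h, zero_mul, add_zero]
      have : ∀ z, p x z * ∑ k ∈ Finset.range (n + 1), fn p k z y * pn p (n - k) y y
          = ∑ k ∈ Finset.range (n + 1), p x z * fn p k z y * pn p (n - k) y y := by
        intro z; rw [Finset.mul_sum]; exact Finset.sum_congr rfl fun k _ => by ring
      simp_rw [this]
      rw [Summable.tsum_finsetSum (fun i _ => ENNReal.summable)]
      refine Finset.sum_congr rfl fun k hk => ?_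
      simp only [Finset.mem_range] at hk
      rw [fn_succ, if_neg h]
      have hnk : n + 1 - (k + 1) = n - k := by omega
      rw [hnk, ← ENNReal.tsum_mul_right]

/-- `G(x,y) = F(x,y) G(y,y)`. -/
lemma Grn_eq (p : V → V → ℝ≥0∞) (x y : V) : Grn p x y = Fhit p x y * Grn p y y := by
  rw [Grn, Fhit, Grn, ← cauchy]
  exact tsum_congr fun n => pn_renewal p y n x


section Tree

variable {root : V} {par : V → V} {depth : V → ℕ}

/-- membership in the branch of `x`. -/
def inB (par : V → V) (x v : V) : Prop := ∃ k, par^[k] v = x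

variable (hroot : par root = root) (hdepth0 : depth root = 0)
  (hdepth : ∀ x, x ≠ root → depth (par x) + 1 = depth x)

include hdepth in
lemma depth_eq_zero : ∀ x : V, depth x = 0 → x = root := by
  intro x hx
  by_contra h
  have := hdepth x h
  omega

include hdepth hdepth0 in
lemma depth_iter_le : ∀ (k : ℕ) (x : V), k ≤ depth x → depth (par^[k] x) = depth x - k := by
  intro k
  induction k with
  | zero => intro x _; simp
  | succ k ih =>
    intro x hk
    rw [Function.iterate_succ_apply']
    have h1 : depth (par^[k] x) = depth x - k := ih x (by omega)
    have h2 : par^[k] x ≠ root := by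
      intro h
      rw [h, hdepth0] at h1
      omega
    have := hdepth _ h2
    omega

include hroot in
lemma iter_root : ∀ m : ℕ, par^[m] root = root := fun m => Function.iterate_fixed hroot m

include hroot hdepth hdepth0 in
lemma iter_ge_root : ∀ (k : ℕ) (x : V), depth x ≤ k → par^[k] x = root := by
  intro k x hk
  have h1 : par^[depth x] x = root :=
    depth_eq_zero hdepth _ (by rw [depth_iter_le hdepth0 hdepth _ _ le_rfl]; omega)
  have : k = (k - depth x) + depth x := by omega
  rw [this, Function.iterate_add_apply, h1, iter_root hroot]

include hroot hdepth hdepth0 in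
lemma inB_le_depth {x v : V} (hx : x ≠ root) (h : inB par x v) :
    depth x ≤ depth v ∧ par^[depth v - depth x] v = x := by
  obtain ⟨k, hk⟩ := h
  by_cases hkd : k ≤ depth v
  · have := depth_iter_le hdepth0 hdepth k v hkd
    rw [hk] at this
    refine ⟨by omega, ?_⟩
    have : depth v - depth x = k := by omega
    rw [this, hk]
  · exact absurd (hk ▸ iter_ge_root hroot hdepth0 hdepth k v (by omega)) hx

lemma inB_self (x : V) : inB par x x := ⟨0, rfl⟩

lemma inB_of_par {x v : V} (h : inB par x (par v)) : inB par x v := by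
  obtain ⟨k, hk⟩ := h
  exact ⟨k + 1, by rw [Function.iterate_succ_apply]; exact hk⟩

include hroot hdepth hdepth0 in
lemma par_not_inB {x : V} (hx : x ≠ root) : ¬ inB par x (par x) := by
  intro h
  have h1 := inB_le_depth hroot hdepth0 hdepth hx h
  have h2 := hdepth x hx
  omega

include hroot hdepth hdepth0 in
lemma root_not_inB {x : V} (hx : x ≠ root) : ¬ inB par x root := by
  intro h
  have h1 := inB_le_depth hroot hdepth0 hdepth hx h
  rw [hdepth0] at h1
  exact hx (depth_eq_zero hdepth x (by omega))

variable {p : V → V → ℝ≥0∞} (hnn : ∀ x y : V, 0 < p x y ↔ adjT par x y)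

include hnn in
lemma cross_out {x v w : V} (hv : inB par x v) (hw : ¬ inB par x w)
    (hp : p v w ≠ 0) : v = x ∧ w = par v := by
  have hadj : adjT par v w := (hnn v w).mp (pos_iff_ne_zero.mpr hp)
  obtain ⟨hne, hor⟩ := hadj
  rcases hor with h | h
  · -- par v = w
    obtain ⟨k, hk⟩ := hv
    cases k with
    | zero => exact ⟨hk, h.symm⟩
    | succ k =>
      rw [Function.iterate_succ_apply, h] at hk
      exact absurd ⟨k, hk⟩ hw
  · -- par w = v
    exact absurd (inB_of_par (h ▸ hv)) hw

include hnn in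
lemma cross_in {x v w : V} (hv : ¬ inB par x v) (hw : inB par x w)
    (hp : p v w ≠ 0) : w = x ∧ v = par w := by
  have hadj : adjT par v w := (hnn v w).mp (pos_iff_ne_zero.mpr hp)
  obtain ⟨hne, hor⟩ := hadj
  rcases hor with h | h
  · exact absurd (inB_of_par (h ▸ hw)) hv
  · obtain ⟨k, hk⟩ := hw
    cases k with
    | zero => exact ⟨hk, h.symm⟩
    | succ k =>
      rw [Function.iterate_succ_apply, h] at hk
      exact absurd ⟨k, hk⟩ hv

include hroot hdepth0 hdepth hnn in
/-- First-passage decomposition through `par x` for a walk from the branch of `x` to the root. -/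
lemma decomp_root {x : V} (hx : x ≠ root) :
    ∀ (n : ℕ) (a : V), inB par x a →
      fn p n a root = ∑ k ∈ Finset.range (n + 1), fn p k a (par x) * fn p (n - k) (par x) root := by
  intro n
  induction n with
  | zero =>
    intro a ha
    have h1 : a ≠ root := fun h => root_not_inB hroot hdepth0 hdepth hx (h ▸ ha)
    have h2 : a ≠ par x := fun h => par_not_inB hroot hdepth0 hdepth hx (h ▸ ha)
    simp [fn_zero, h1, h2]
  | succ n ih =>
    intro a ha
    have h1 : a ≠ root := fun h => root_not_inB hroot hdepth0 hdepth hx (h ▸ ha)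
    have h2 : a ≠ par x := fun h => par_not_inB hroot hdepth0 hdepth hx (h ▸ ha)
    rw [fn_succ, if_neg h1]
    have step : ∀ z, p a z * fn p n z root
        = p a z * ∑ k ∈ Finset.range (n + 1), fn p k z (par x) * fn p (n - k) (par x) root := by
      intro z
      by_cases hz : p a z = 0
      · rw [hz, zero_mul, zero_mul]
      · by_cases hzB : inB par x z
        · rw [ih z hzB]
        · obtain ⟨hax, hzp⟩ := cross_out hnn ha hzB hz
          subst hax
          rw [hzp]
          congr 1
          rw [Finset.sum_eq_single_of_mem 0 (Finset.mem_range.mpr (Nat.succ_pos _))]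
          · simp [fn_self]
          · intro b _ hb
            simp [fn_self, hb]
    simp_rw [step]
    rw [Finset.sum_range_succ' (fun k => fn p k a (par x) * fn p (n + 1 - k) (par x) root)]
    rw [fn_zero, if_neg h2, zero_mul, add_zero]
    have redistribute : ∀ z, p a z * ∑ k ∈ Finset.range (n + 1), fn p k z (par x) * fn p (n - k) (par x) root
        = ∑ k ∈ Finset.range (n + 1), p a z * fn p k z (par x) * fn p (n - k) (par x) root := by
      intro z
      rw [Finset.mul_sum]
      exact Finset.sum_congr rfl fun k _ => by ring
    simp_rw [redistribute]
    rw [Summable.tsum_finsetSum (fun i _ => ENNReal.summable)]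
    refine Finset.sum_congr rfl fun k hk => ?_
    rw [fn_succ, if_neg h2]
    have hnk : n + 1 - (k + 1) = n - k := by omega
    rw [hnk, ← ENNReal.tsum_mul_right]

include hroot hdepth0 hdepth hnn in
/-- First-passage decomposition through `par x` for a walk from outside the branch of `x` to `x`. -/
lemma decomp_x {x : V} (hx : x ≠ root) :
    ∀ (n : ℕ) (a : V), ¬ inB par x a →
      fn p n a x = ∑ k ∈ Finset.range (n + 1), fn p k a (par x) * fn p (n - k) (par x) x := by
  have hpx : par x ≠ x := by
    intro h
    have := hdepth x hx
    rw [h] at this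
    omega
  have triv : ∀ m : ℕ,
      ∑ k ∈ Finset.range (m + 1), fn p k (par x) (par x) * fn p (m - k) (par x) x
        = fn p m (par x) x := by
    intro m
    rw [Finset.sum_eq_single_of_mem 0 (Finset.mem_range.mpr (Nat.succ_pos _))]
    · simp [fn_self]
    · intro b _ hb
      simp [fn_self, hb]
  intro n
  induction n with
  | zero =>
    intro a ha
    by_cases h2 : a = par x
    · subst h2; exact (triv 0).symm
    · have h1 : a ≠ x := fun h => ha (by rw [h]; exact inB_self x)
      simp [fn_zero, h1, h2, hpx]
  | succ n ih =>
    intro a ha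
    by_cases h2 : a = par x
    · subst h2; exact (triv (n + 1)).symm
    · have h1 : a ≠ x := fun h => ha (by rw [h]; exact inB_self x)
      rw [fn_succ, if_neg h1]
      have step : ∀ z, p a z * fn p n z x
          = p a z * ∑ k ∈ Finset.range (n + 1), fn p k z (par x) * fn p (n - k) (par x) x := by
        intro z
        by_cases hz : p a z = 0
        · rw [hz, zero_mul, zero_mul]
        · by_cases hzB : inB par x z
          · obtain ⟨hzx, hap⟩ := cross_in hnn ha hzB hz
            exact absurd (hzx ▸ hap) h2
          · rw [ih z hzB]
      simp_rw [step]
      rw [Finset.sum_range_succ' (fun k => fn p k a (par x) * fn p (n + 1 - k) (par x) x)]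
      rw [fn_zero, if_neg h2, zero_mul, add_zero]
      have redistribute : ∀ z, p a z * ∑ k ∈ Finset.range (n + 1), fn p k z (par x) * fn p (n - k) (par x) x
          = ∑ k ∈ Finset.range (n + 1), p a z * fn p k z (par x) * fn p (n - k) (par x) x := by
        intro z
        rw [Finset.mul_sum]
        exact Finset.sum_congr rfl fun k _ => by ring
      simp_rw [redistribute]
      rw [Summable.tsum_finsetSum (fun i _ => ENNReal.summable)]
      refine Finset.sum_congr rfl fun k hk => ?_
      rw [fn_succ, if_neg h2]
      have hnk : n + 1 - (k + 1) = n - k := by omega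
      rw [hnk, ← ENNReal.tsum_mul_right]

include hroot hdepth0 hdepth hnn in
lemma Fhit_decomp_root {x : V} (hx : x ≠ root) {a : V} (ha : inB par x a) :
    Fhit p a root = Fhit p a (par x) * Fhit p (par x) root := by
  rw [Fhit, Fhit, Fhit, ← cauchy]
  exact tsum_congr fun n => decomp_root hroot hdepth0 hdepth hnn hx n a ha

include hroot hdepth0 hdepth hnn in
lemma Fhit_decomp_x {x : V} (hx : x ≠ root) {a : V} (ha : ¬ inB par x a) :
    Fhit p a x = Fhit p a (par x) * Fhit p (par x) x := by
  rw [Fhit, Fhit, Fhit, ← cauchy]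
  exact tsum_congr fun n => decomp_x hroot hdepth0 hdepth hnn hx n a ha

end Tree

section Walk

variable {V : Type*} [DecidableEq V] {p : V → V → ℝ≥0∞} (hstoch : ∀ x : V, ∑' y, p x y = 1)

include hstoch in
lemma sum_fn_le_one (y : V) : ∀ (N : ℕ) (x : V), ∑ n ∈ Finset.range N, fn p n x y ≤ 1 := by
  intro N
  induction N with
  | zero => intro x; simp
  | succ N ih =>
    intro x
    rw [Finset.sum_range_succ' (fun n => fn p n x y)]
    by_cases h : x = y
    · subst h
      have : ∀ i ∈ Finset.range N, fn p (i + 1) x x = 0 := fun i _ => by simp [fn_self]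
      rw [Finset.sum_congr rfl this]
      simp [fn_zero]
    · rw [fn_zero, if_neg h, add_zero]
      have hterm : ∀ i ∈ Finset.range N, fn p (i + 1) x y = ∑' z, p x z * fn p i z y :=
        fun i _ => by rw [fn_succ, if_neg h]
      rw [Finset.sum_congr rfl hterm, ← Summable.tsum_finsetSum (fun i _ => ENNReal.summable)]
      calc ∑' z, ∑ i ∈ Finset.range N, p x z * fn p i z y
          = ∑' z, p x z * ∑ i ∈ Finset.range N, fn p i z y := by
            exact tsum_congr fun z => (Finset.mul_sum _ _ _).symm
        _ ≤ ∑' z, p x z * 1 := ENNReal.tsum_le_tsum fun z => mul_le_mul_right (ih z) _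
        _ = 1 := by simpa using hstoch x

include hstoch in
lemma Fhit_le_one (x y : V) : Fhit p x y ≤ 1 := by
  rw [Fhit, ENNReal.tsum_eq_iSup_sum]
  refine iSup_le fun s => ?_
  calc ∑ n ∈ s, fn p n x y ≤ ∑ n ∈ Finset.range (s.sup id + 1), fn p n x y := by
        refine Finset.sum_le_sum_of_subset fun n hn => ?_
        simp only [Finset.mem_range]
        exact Nat.lt_succ_of_le (Finset.le_sup (f := id) hn)
    _ ≤ 1 := sum_fn_le_one hstoch y _ x

end Walk



section Pos

variable {V : Type*} [DecidableEq V] {root : V} {par : V → V} {depth : V → ℕ}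
  {p : V → V → ℝ≥0∞}
  (hroot : par root = root) (hdepth0 : depth root = 0)
  (hdepth : ∀ x, x ≠ root → depth (par x) + 1 = depth x)
  (hnn : ∀ x y : V, 0 < p x y ↔ adjT par x y)

include hdepth in
lemma ne_par {x : V} (hx : x ≠ root) : x ≠ par x := by
  intro h
  have := hdepth x hx
  rw [← h] at this
  omega

include hdepth hnn in
lemma Fhit_par_pos {x : V} (hx : x ≠ root) : 0 < Fhit p x (par x) := by
  have hne := ne_par hdepth hx
  have hp : 0 < p x (par x) := (hnn x (par x)).mpr ⟨hne, Or.inl rfl⟩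
  have h1 : p x (par x) ≤ fn p 1 x (par x) := by
    rw [fn_succ, if_neg hne]
    have : p x (par x) = p x (par x) * fn p 0 (par x) (par x) := by simp [fn_zero]
    rw [this]
    exact ENNReal.le_tsum (par x)
  calc (0 : ℝ≥0∞) < p x (par x) := hp
    _ ≤ fn p 1 x (par x) := h1
    _ ≤ Fhit p x (par x) := ENNReal.le_tsum 1

include hdepth hnn in
lemma Fhit_par_pos' {x : V} (hx : x ≠ root) : 0 < Fhit p (par x) x := by
  have hne := ne_par hdepth hx
  have hp : 0 < p (par x) x := (hnn (par x) x).mpr ⟨fun h => hne h.symm, Or.inr rfl⟩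
  have h1 : p (par x) x ≤ fn p 1 (par x) x := by
    rw [fn_succ, if_neg hne.symm]
    have : p (par x) x = p (par x) x * fn p 0 x x := by simp [fn_zero]
    rw [this]
    exact ENNReal.le_tsum x
  calc (0 : ℝ≥0∞) < p (par x) x := hp
    _ ≤ fn p 1 (par x) x := h1
    _ ≤ Fhit p (par x) x := ENNReal.le_tsum 1

include hroot hdepth0 hdepth hnn in
lemma Fhit_from_root_pos : ∀ (n : ℕ) (x : V), depth x = n → 0 < Fhit p root x := by
  intro n
  induction n using Nat.strong_induction_on with
  | _ n ih =>
    intro x hxd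
    by_cases hx : x = root
    · subst hx; rw [Fhit_self]; exact one_pos
    · have hd := hdepth x hx
      have h1 : 0 < Fhit p root (par x) := ih (depth (par x)) (by omega) (par x) rfl
      have h2 : 0 < Fhit p (par x) x := Fhit_par_pos' hdepth hnn hx
      rw [Fhit_decomp_x hroot hdepth0 hdepth hnn hx (root_not_inB hroot hdepth0 hdepth hx)]
      exact ENNReal.mul_pos h1.ne' h2.ne'

include hroot hdepth0 hdepth hnn in
lemma Fhit_to_root_pos : ∀ (n : ℕ) (x : V), depth x = n → 0 < Fhit p x root := by
  intro n
  induction n using Nat.strong_induction_on with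
  | _ n ih =>
    intro x hxd
    by_cases hx : x = root
    · subst hx; rw [Fhit_self]; exact one_pos
    · have hd := hdepth x hx
      have h1 : 0 < Fhit p (par x) root := ih (depth (par x)) (by omega) (par x) rfl
      have h2 : 0 < Fhit p x (par x) := Fhit_par_pos hdepth hnn hx
      rw [Fhit_decomp_root hroot hdepth0 hdepth hnn hx (inB_self x)]
      exact ENNReal.mul_pos h2.ne' h1.ne'

lemma Grn_ge_one (y : V) : 1 ≤ Grn p y y := by
  have : (1 : ℝ≥0∞) = pn p 0 y y := by simp [pn_zero]
  rw [this]
  exact ENNReal.le_tsum 0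

end Pos

section EndsSec

variable {V : Type*} [DecidableEq V] {root : V} {par : V → V} {depth : V → ℕ} {φ : V → ℝ}
  (hroot : par root = root) (hdepth0 : depth root = 0)
  (hdepth : ∀ x, x ≠ root → depth (par x) + 1 = depth x)
  (hpos : ∀ x, 0 < φ x)
  (hmono : ∀ x, x ≠ root → φ x < φ (par x))

lemma end_iter (ξ : Ends root par) : ∀ (m j : ℕ), par^[j] (ξ.1 (m + j)) = ξ.1 m := by
  intro m j
  induction j with
  | zero => rfl
  | succ j ih =>
    rw [Function.iterate_succ_apply]
    have h1 : par (ξ.1 ((m + j) + 1)) = ξ.1 (m + j) := (ξ.2.2 (m + j)).1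
    rw [show m + (j + 1) = (m + j) + 1 by omega, h1]
    exact ih

include hroot hdepth0 hdepth in
lemma end_depth (ξ : Ends root par) : ∀ n, depth (ξ.1 n) = n := by
  intro n
  induction n with
  | zero => rw [ξ.2.1, hdepth0]
  | succ n ih =>
    have hne : ξ.1 (n + 1) ≠ root := by
      intro h
      have h1 := (ξ.2.2 n).1
      have h2 := (ξ.2.2 n).2
      rw [h, hroot] at h1
      exact h2 (by rw [h, ← h1])
    have := hdepth _ hne
    rw [(ξ.2.2 n).1, ih] at this
    omega

include hroot hdepth0 hdepth hmono in
lemma end_phi_strictAnti (ξ : Ends root par) : StrictAnti (fun n => φ (ξ.1 n)) := by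
  apply strictAnti_nat_of_succ_lt
  intro n
  have hne : ξ.1 (n + 1) ≠ root := by
    intro h
    have := end_depth hroot hdepth0 hdepth ξ (n + 1)
    rw [h, hdepth0] at this
    omega
  have := hmono _ hne
  rwa [(ξ.2.2 n).1] at this

lemma agree_mono (ξ η : Ends root par) {m n : ℕ} (h : m ≤ n) (hn : ξ.1 n = η.1 n) :
    ξ.1 m = η.1 m := by
  have h1 := end_iter ξ m (n - m)
  have h2 := end_iter η m (n - m)
  rw [show m + (n - m) = n by omega] at h1 h2
  rw [← h1, ← h2, hn]

lemma agree_bdd {ξ η : Ends root par} (hne : ξ ≠ η) : BddAbove {n | ξ.1 n = η.1 n} := by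
  by_contra h
  apply hne
  apply Subtype.ext
  funext n
  rw [not_bddAbove_iff] at h
  obtain ⟨m, hm, hnm⟩ := h n
  exact agree_mono ξ η hnm.le hm

lemma confl_eq_of {ξ η : Ends root par} (d : ℕ)
    (hagree : ∀ n ≤ d, ξ.1 n = η.1 n) (hdis : ξ.1 (d + 1) ≠ η.1 (d + 1)) :
    confl ξ η = ξ.1 d ∧ ξ ≠ η := by
  have hsub : {n | ξ.1 n = η.1 n} ⊆ Set.Iic d := by
    intro n hn
    simp only [Set.mem_Iic]
    by_contra hlt
    exact hdis (agree_mono ξ η (by omega) hn)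
  have hd : d ∈ {n | ξ.1 n = η.1 n} := hagree d le_rfl
  have hsup : sSup {n | ξ.1 n = η.1 n} = d :=
    le_antisymm (csSup_le ⟨d, hd⟩ fun n hn => hsub hn) (le_csSup ⟨d, fun n hn => hsub hn⟩ hd)
  refine ⟨by rw [confl, hsup], fun h => hdis (by rw [h])⟩

/-- The ray through `x`, extended by a child-choice function `c`. -/
def raySeq (par c : V → V) (depth : V → ℕ) (x : V) : ℕ → V := fun n =>
  if n ≤ depth x then par^[depth x - n] x else c^[n - depth x] x

variable {c : V → V} (hc1 : ∀ v, par (c v) = v) (hc2 : ∀ v, c v ≠ v)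

include hroot hdepth0 hdepth hc1 hc2 in
lemma raySeq_spec (x : V) : raySeq par c depth x 0 = root ∧
    ∀ n, par (raySeq par c depth x (n + 1)) = raySeq par c depth x n ∧
      raySeq par c depth x (n + 1) ≠ raySeq par c depth x n := by
  constructor
  · rw [raySeq]
    simp only [Nat.zero_le, if_pos, Nat.sub_zero]
    exact iter_ge_root hroot hdepth0 hdepth _ x le_rfl
  · intro n
    by_cases h : n + 1 ≤ depth x
    · rw [raySeq, raySeq, if_pos h, if_pos (by omega)]
      constructor
      · rw [← Function.iterate_succ_apply' par]
        congr 1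
        omega
      · intro heq
        have e1 : depth (par^[depth x - (n + 1)] x) = depth x - (depth x - (n + 1)) :=
          depth_iter_le hdepth0 hdepth _ x (by omega)
        have e2 : depth (par^[depth x - n] x) = depth x - (depth x - n) :=
          depth_iter_le hdepth0 hdepth _ x (by omega)
        rw [heq, e2] at e1
        omega
    · rw [raySeq, raySeq, if_neg h]
      have hs : n + 1 - depth x = (n - depth x) + 1 := by omega
      rw [hs, Function.iterate_succ_apply' c]
      refine ⟨?_, ?_⟩
      · rw [hc1]
        by_cases h2 : n ≤ depth x
        · have : n = depth x := by omega
          subst this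
          simp
        · rw [if_neg h2]
      · intro heq
        by_cases h2 : n ≤ depth x
        · have : n = depth x := by omega
          subst this
          simp only [le_refl, if_pos, Nat.sub_self, Function.iterate_zero, id_eq] at heq
          exact hc2 _ heq
        · rw [if_neg h2] at heq
          exact hc2 _ heq

include hroot hdepth0 hdepth hc1 hc2 in
/-- The end through `x` obtained by following the ray to `x` and then chosen children. -/
noncomputable def mkRay (x : V) : Ends root par :=
  ⟨raySeq par c depth x,
    (raySeq_spec hroot hdepth0 hdepth hc1 hc2 x).1,
    (raySeq_spec hroot hdepth0 hdepth hc1 hc2 x).2⟩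

include hroot hdepth0 hdepth hc1 hc2 in
lemma mkRay_le {x : V} {n : ℕ} (h : n ≤ depth x) :
    (mkRay hroot hdepth0 hdepth hc1 hc2 x).1 n = par^[depth x - n] x := by
  show raySeq par c depth x n = _
  rw [raySeq, if_pos h]

end EndsSec

section BallSec

variable {V : Type*} [DecidableEq V] {root : V} {par : V → V} {depth : V → ℕ} {φ : V → ℝ}
  (hroot : par root = root) (hdepth0 : depth root = 0)
  (hdepth : ∀ x, x ≠ root → depth (par x) + 1 = depth x)
  (hpos : ∀ x, 0 < φ x)
  (hmono : ∀ x, x ≠ root → φ x < φ (par x))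

include hroot hdepth0 hdepth hpos hmono in
/-- For radii in `[φ(x), φ(x⁻))` the ball around an end through `x` is `∂T_x`. -/
lemma ball_eq_branch {ξ : Ends root par} {x : V} {d : ℕ} (hd : 1 ≤ d)
    (hxd : depth x = d) (hξ : ξ.1 d = x) {r : ℝ} (hr1 : φ x ≤ r)
    (hr2 : r < φ (ξ.1 (d - 1))) :
    ballPhi root par φ ξ r = branchEnds root par x := by
  have hAnti := end_phi_strictAnti hroot hdepth0 hdepth hmono ξ
  ext η
  simp only [ballPhi, branchEnds, Set.mem_setOf_eq]
  by_cases hη : η = ξ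
  · subst hη
    rw [dphi, if_pos rfl]
    exact ⟨fun _ => ⟨d, hξ⟩, fun _ => le_trans (hpos x).le hr1⟩
  · rw [dphi, if_neg hη]
    have h0 : (0 : ℕ) ∈ {n | η.1 n = ξ.1 n} := by
      simp only [Set.mem_setOf_eq, η.2.1, ξ.2.1]
    have hbdd : BddAbove {n | η.1 n = ξ.1 n} := agree_bdd hη
    set m := sSup {n | η.1 n = ξ.1 n} with hmdef
    have hm : η.1 m = ξ.1 m := Nat.sSup_mem ⟨0, h0⟩ hbdd
    have hub : ∀ n, η.1 n = ξ.1 n → n ≤ m := fun n hn => le_csSup hbdd hn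
    have hcm : confl η ξ = η.1 m := rfl
    rw [hcm]
    constructor
    · intro hle
      have hdm : d ≤ m := by
        by_contra hlt
        have h1 : φ (ξ.1 (d - 1)) ≤ φ (ξ.1 m) := hAnti.antitone (by omega)
        rw [← hm] at h1
        linarith
      exact ⟨d, (agree_mono η ξ hdm hm).trans hξ⟩
    · rintro ⟨n, hn⟩
      have hnd : n = d := by
        have := end_depth hroot hdepth0 hdepth η n
        rw [hn, hxd] at this
        omega
      subst hnd
      have hdm : n ≤ m := hub n (by rw [hn, ← hξ])
      have h1 : φ (ξ.1 m) ≤ φ (ξ.1 n) := hAnti.antitone hdm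
      rw [← hm] at h1
      rw [hξ] at h1
      linarith

variable (ν : Measure (Ends root par)) [IsFiniteMeasure ν]

include hroot hdepth0 hdepth hpos hmono in
lemma ball_const {ξ : Ends root par} {x : V} {d : ℕ} (hd : 1 ≤ d)
    (hxd : depth x = d) (hξ : ξ.1 d = x) :
    ∀ t ∈ Set.Ioc (1 / φ (ξ.1 (d - 1))) (1 / φ x),
      ballPhi root par φ ξ (1 / t) = branchEnds root par x := by
  intro t ht
  have hpx : 0 < φ x := hpos x
  have hpw : 0 < φ (ξ.1 (d - 1)) := hpos _
  have ht0 : 0 < t := lt_trans (by positivity) ht.1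
  apply ball_eq_branch hroot hdepth0 hdepth hpos hmono hd hxd hξ
  · rw [le_div_iff₀ ht0]
    have h2 : t ≤ 1 / φ x := ht.2
    rw [le_div_iff₀ hpx] at h2
    nlinarith
  · have h1 : 1 / φ (ξ.1 (d - 1)) < t := ht.1
    rw [div_lt_iff₀ hpw] at h1
    rw [div_lt_iff₀ ht0]
    nlinarith

include hroot hdepth0 hdepth hpos hmono in
lemma piece_II {ξ : Ends root par} {x : V} {d : ℕ} (hd : 1 ≤ d)
    (hxd : depth x = d) (hξ : ξ.1 d = x) :
    IntervalIntegrable (fun t => ((ν (ballPhi root par φ ξ (1 / t))).toReal)⁻¹)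
      MeasureTheory.volume (1 / φ (ξ.1 (d - 1))) (1 / φ x) := by
  have hAnti := end_phi_strictAnti hroot hdepth0 hdepth hmono ξ
  have hw : φ x < φ (ξ.1 (d - 1)) := by
    have h := hAnti (show d - 1 < d by omega)
    simpa [hξ] using h
  have hle : 1 / φ (ξ.1 (d - 1)) ≤ 1 / φ x :=
    one_div_le_one_div_of_le (hpos x) hw.le
  rw [intervalIntegrable_iff_integrableOn_Ioc_of_le hle]
  refine MeasureTheory.IntegrableOn.congr_fun
    (f := fun _ : ℝ => ((ν (branchEnds root par x)).toReal)⁻¹)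
    ((MeasureTheory.integrableOn_const_iff).mpr (Or.inr measure_Ioc_lt_top)) ?_ measurableSet_Ioc
  intro t ht
  simp only
  rw [ball_const hroot hdepth0 hdepth hpos hmono hd hxd hξ t ht]

include hroot hdepth0 hdepth hpos hmono in
lemma piece_integral {ξ : Ends root par} {x : V} {d : ℕ} (hd : 1 ≤ d)
    (hxd : depth x = d) (hξ : ξ.1 d = x) :
    ∫ t in (1 / φ (ξ.1 (d - 1)))..(1 / φ x),
        ((ν (ballPhi root par φ ξ (1 / t))).toReal)⁻¹
      = (1 / φ x - 1 / φ (ξ.1 (d - 1))) * ((ν (branchEnds root par x)).toReal)⁻¹ := by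
  have hAnti := end_phi_strictAnti hroot hdepth0 hdepth hmono ξ
  have hw : φ x < φ (ξ.1 (d - 1)) := by
    have h := hAnti (show d - 1 < d by omega)
    simpa [hξ] using h
  have hle : 1 / φ (ξ.1 (d - 1)) ≤ 1 / φ x :=
    one_div_le_one_div_of_le (hpos x) hw.le
  rw [show (∫ t in (1 / φ (ξ.1 (d - 1)))..(1 / φ x),
        ((ν (ballPhi root par φ ξ (1 / t))).toReal)⁻¹)
      = ∫ _ in (1 / φ (ξ.1 (d - 1)))..(1 / φ x),
          ((ν (branchEnds root par x)).toReal)⁻¹ from ?_]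
  · rw [intervalIntegral.integral_const, smul_eq_mul]
  · apply intervalIntegral.integral_congr_ae
    apply MeasureTheory.ae_of_all
    intro t ht
    rw [Set.uIoc_of_le hle] at ht
    rw [ball_const hroot hdepth0 hdepth hpos hmono hd hxd hξ t ht]

include hroot hdepth0 hdepth hpos hmono in
lemma ray_II (ξ : Ends root par) :
    ∀ k, IntervalIntegrable (fun t => ((ν (ballPhi root par φ ξ (1 / t))).toReal)⁻¹)
      MeasureTheory.volume (1 / φ (ξ.1 0)) (1 / φ (ξ.1 k)) := by
  intro k
  induction k with
  | zero => exact IntervalIntegrable.refl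
  | succ k ih =>
    refine ih.trans ?_
    have := piece_II hroot hdepth0 hdepth hpos hmono (ν := ν) (ξ := ξ)
      (x := ξ.1 (k + 1)) (d := k + 1) (by omega)
      (end_depth hroot hdepth0 hdepth ξ (k + 1)) rfl
    simpa using this

end BallSec

end S16

/-- Let `T` be a rooted tree with forward degrees `≥ 2` carrying a transient nearest
neighbour random walk whose limit distribution `ν_o` is fully supported on `∂T` and
whose Green kernel vanishes at infinity.  If an ultrametric element `φ` satisfies, for
all ends `ξ ≠ η`,
`1/φ(o) + ∫_{1/φ(o)}^{1/φ(ξ∧η)} dt/ν_o(B_φ(ξ,1/t)) = 1/(G(o,o)F(o,ξ∧η)F(ξ∧η,o))`,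
then `φ(x) = G(x,o)` for all `x ∈ T`. -/

theorem stmt_16 (root : V) (par : V → V) (depth : V → ℕ)
    (hroot : par root = root) (hdepth0 : depth root = 0)
    (hdepth : ∀ x, x ≠ root → depth (par x) + 1 = depth x)
    (hlocfin : ∀ x : V, {y | par y = x ∧ y ≠ x}.Finite)
    (hdeg : ∀ x : V, ∃ y z : V, y ≠ z ∧ par y = x ∧ par z = x ∧ y ≠ x ∧ z ≠ x)
    (p : V → V → ℝ≥0∞)
    (hnn : ∀ x y : V, 0 < p x y ↔ adjT par x y)
    (hstoch : ∀ x : V, ∑' y, p x y = 1)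
    (htrans : ∀ x y : V, Grn p x y < ⊤)
    (hF : ∀ x, x ≠ root → Fhit p x (par x) < 1)
    (hG0 : ∀ ε : ℝ≥0∞, 0 < ε → {x : V | ε ≤ Grn p x root}.Finite)
    (φ : V → ℝ) (hpos : ∀ x, 0 < φ x)
    (hmono : ∀ x, x ≠ root → φ x < φ (par x))
    (hlim : ∀ ξ : Ends root par, Tendsto (fun n => φ (ξ.1 n)) atTop (nhds 0))
    (ν : Measure (Ends root par)) [IsProbabilityMeasure ν]
    (hν : ∀ x, x ≠ root → ν (branchEnds root par x)
      = Fhit p root x * (1 - Fhit p x (par x))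
          / (1 - Fhit p (par x) x * Fhit p x (par x)))
    (hid : ∀ ξ η : Ends root par, ξ ≠ η →
      1 / φ root
        + ∫ t in (1 / φ root)..(1 / φ (confl ξ η)),
            ((ν (ballPhi root par φ ξ (1 / t))).toReal)⁻¹
      = 1 / ((Grn p root root).toReal * (Fhit p root (confl ξ η)).toReal
          * (Fhit p (confl ξ η) root).toReal)) :
    ∀ x : V, φ x = (Grn p x root).toReal := by
  classical
  have hcex : ∀ v : V, ∃ y, par y = v ∧ y ≠ v := by
    intro v
    obtain ⟨y, z, _, h2, _, h4, _⟩ := hdeg v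
    exact ⟨y, h2, h4⟩
  let c : V → V := fun v => (hcex v).choose
  have hc1 : ∀ v, par (c v) = v := fun v => (hcex v).choose_spec.1
  have hc2 : ∀ v, c v ≠ v := fun v => (hcex v).choose_spec.2
  have hFle : ∀ a b : V, Fhit p a b ≤ 1 := fun a b => S16.Fhit_le_one hstoch a b
  have hFne : ∀ a b : V, Fhit p a b ≠ ⊤ :=
    fun a b => ((hFle a b).trans_lt ENNReal.one_lt_top).ne
  have hG1 : 1 ≤ Grn p root root := S16.Grn_ge_one root
  have hGne : Grn p root root ≠ ⊤ := (htrans root root).ne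
  have hGpos : 0 < (Grn p root root).toReal :=
    ENNReal.toReal_pos (zero_lt_one.trans_le hG1).ne' hGne
  have hzero : ∀ x : V, depth x = 0 → x = root := S16.depth_eq_zero hdepth
  have hchild_depth : ∀ {a b : V}, par a = b → a ≠ b → depth a = depth b + 1 := by
    intro a b h1 h2
    have ha : a ≠ root := by
      intro h
      rw [h, hroot] at h1
      exact h2 (h.trans h1)
    have := hdepth a ha
    rw [h1] at this
    omega
  let ray : V → Ends root par := fun x => S16.mkRay hroot hdepth0 hdepth hc1 hc2 x
  have hray : ∀ (x : V) (n : ℕ), n ≤ depth x → (ray x).1 n = par^[depth x - n] x :=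
    fun x n h => S16.mkRay_le hroot hdepth0 hdepth hc1 hc2 h
  suffices H : ∀ (n : ℕ) (x : V), depth x = n → φ x = (Grn p x root).toReal by
    exact fun x => H (depth x) x rfl
  intro n
  induction n with
  | zero =>
    intro x hxd
    have hxr := hzero x hxd
    rw [hxr]
    obtain ⟨y, z, hyz, hpy, hpz, hyx, hzx⟩ := hdeg root
    have hdy : depth y = 1 := by rw [hchild_depth hpy hyx, hdepth0]
    have hdz : depth z = 1 := by rw [hchild_depth hpz hzx, hdepth0]
    have hy1 : (ray y).1 1 = y := by
      rw [hray y 1 (by omega), hdy]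
      simp
    have hz1 : (ray z).1 1 = z := by
      rw [hray z 1 (by omega), hdz]
      simp
    have hagree : ∀ k ≤ 0, (ray y).1 k = (ray z).1 k := by
      intro k hk
      have hk0 : k = 0 := by omega
      subst hk0
      rw [(ray y).2.1, (ray z).2.1]
    have hdis : (ray y).1 (0 + 1) ≠ (ray z).1 (0 + 1) := by
      rw [show (0 + 1 : ℕ) = 1 by omega, hy1, hz1]
      exact hyz
    obtain ⟨hconfl, hne⟩ := S16.confl_eq_of 0 hagree hdis
    have hid0 := hid (ray y) (ray z) hne
    rw [hconfl, (ray y).2.1] at hid0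
    rw [intervalIntegral.integral_same, add_zero, S16.Fhit_self] at hid0
    simp only [ENNReal.toReal_one, mul_one] at hid0
    rw [one_div, one_div] at hid0
    exact inv_injective hid0
  | succ n ih =>
    intro x hxd
    have hx : x ≠ root := by
      intro h
      rw [h, hdepth0] at hxd
      omega
    have hdw : depth (par x) = n := by
      have := hdepth x hx
      omega
    have hIH : φ (par x) = (Grn p (par x) root).toReal := ih (par x) hdw
    obtain ⟨y, z, hyz, hpy, hpz, hyx, hzx⟩ := hdeg x
    have hdy : depth y = n + 2 := by rw [hchild_depth hpy hyx, hxd]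
    have hdz : depth z = n + 2 := by rw [hchild_depth hpz hzx, hxd]
    set ξ : Ends root par := ray y with hξdef
    set η : Ends root par := ray z with hηdef
    have hξd : ∀ k, k ≤ n + 2 → ξ.1 k = par^[n + 2 - k] y := by
      intro k hk
      rw [hξdef, hray y k (by omega), hdy]
    have hηd : ∀ k, k ≤ n + 2 → η.1 k = par^[n + 2 - k] z := by
      intro k hk
      rw [hηdef, hray z k (by omega), hdz]
    have hξx : ξ.1 (n + 1) = x := by
      rw [hξd (n + 1) (by omega), show n + 2 - (n + 1) = 1 by omega]
      simpa using hpy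
    have hξw : ξ.1 n = par x := by
      rw [hξd n (by omega), show n + 2 - n = 2 by omega]
      have h2 : par^[2] y = par (par y) := by
        rw [Function.iterate_succ_apply', Function.iterate_one]
      rw [h2, hpy]
    obtain ⟨y₂, z₂, hyz₂, hpy₂, hpz₂, hy₂, hz₂⟩ := hdeg (par x)
    obtain ⟨s, hps, hsx, hsw⟩ : ∃ s : V, par s = par x ∧ s ≠ x ∧ s ≠ par x := by
      by_cases h : y₂ = x
      · exact ⟨z₂, hpz₂, fun hh => hyz₂ (h.symm ▸ hh.symm ▸ rfl), hz₂⟩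
      · exact ⟨y₂, hpy₂, h, hy₂⟩
    have hds : depth s = n + 1 := by rw [hchild_depth hps hsw, hdw]
    set η' : Ends root par := ray s with hη'def
    have hη'd : ∀ k, k ≤ n + 1 → η'.1 k = par^[n + 1 - k] s := by
      intro k hk
      rw [hη'def, hray s k (by omega), hds]
    have hagree1 : ∀ k ≤ n + 1, ξ.1 k = η.1 k := by
      intro k hk
      rw [hξd k (by omega), hηd k (by omega), show n + 2 - k = (n + 1 - k) + 1 by omega,
        Function.iterate_succ_apply, Function.iterate_succ_apply, hpy, hpz]
    have hdis1 : ξ.1 ((n + 1) + 1) ≠ η.1 ((n + 1) + 1) := by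
      rw [hξd _ (by omega), hηd _ (by omega), show n + 2 - ((n + 1) + 1) = 0 by omega]
      simpa using hyz
    obtain ⟨hconfl1, hne1⟩ := S16.confl_eq_of (n + 1) hagree1 hdis1
    rw [hξx] at hconfl1
    have hagree2 : ∀ k ≤ n, ξ.1 k = η'.1 k := by
      intro k hk
      rw [hξd k (by omega), hη'd k (by omega),
        show n + 2 - k = ((n - k) + 1) + 1 by omega,
        show n + 1 - k = (n - k) + 1 by omega,
        Function.iterate_succ_apply, Function.iterate_succ_apply, hpy,
        Function.iterate_succ_apply, hps]
    have hdis2 : ξ.1 (n + 1) ≠ η'.1 (n + 1) := by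
      rw [hξx, hη'd _ le_rfl, show n + 1 - (n + 1) = 0 by omega]
      simpa using fun hh => hsx hh.symm
    obtain ⟨hconfl2, hne2⟩ := S16.confl_eq_of n hagree2 hdis2
    rw [hξw] at hconfl2
    have hA := hid ξ η hne1
    rw [hconfl1] at hA
    have hB := hid ξ η' hne2
    rw [hconfl2] at hB
    have hroot0 : ξ.1 0 = root := ξ.2.1
    have hII1 : IntervalIntegrable
        (fun t => ((ν (ballPhi root par φ ξ (1 / t))).toReal)⁻¹)
        MeasureTheory.volume (1 / φ root) (1 / φ (par x)) := by
      have h := S16.ray_II hroot hdepth0 hdepth hpos hmono ν ξ n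
      rwa [hroot0, hξw] at h
    have hII2 : IntervalIntegrable
        (fun t => ((ν (ballPhi root par φ ξ (1 / t))).toReal)⁻¹)
        MeasureTheory.volume (1 / φ (par x)) (1 / φ x) := by
      have h := S16.piece_II hroot hdepth0 hdepth hpos hmono ν (d := n + 1)
        (by omega) hxd hξx
      rwa [show n + 1 - 1 = n by omega, hξw] at h
    have hadd := intervalIntegral.integral_add_adjacent_intervals hII1 hII2
    have hpiece := S16.piece_integral hroot hdepth0 hdepth hpos hmono ν (d := n + 1)
      (by omega) hxd hξx
    rw [show n + 1 - 1 = n by omega, hξw] at hpiece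
    have hkey : (1 / φ x - 1 / φ (par x)) * ((ν (branchEnds root par x)).toReal)⁻¹
        = 1 / ((Grn p root root).toReal * (Fhit p root x).toReal * (Fhit p x root).toReal)
          - 1 / ((Grn p root root).toReal * (Fhit p root (par x)).toReal
              * (Fhit p (par x) root).toReal) := by
      rw [← hpiece]
      linarith [hA, hB, hadd]
    set g0 : ℝ := (Grn p root root).toReal with hg0def
    set u : ℝ := (Fhit p root (par x)).toReal with hudef
    set v : ℝ := (Fhit p (par x) root).toReal with hvdef
    set sF : ℝ := (Fhit p (par x) x).toReal with hsFdef
    set q : ℝ := (Fhit p x (par x)).toReal with hqdef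
    have hu : 0 < u := ENNReal.toReal_pos
      (S16.Fhit_from_root_pos hroot hdepth0 hdepth hnn (depth (par x)) (par x) rfl).ne'
      (hFne _ _)
    have hv : 0 < v := ENNReal.toReal_pos
      (S16.Fhit_to_root_pos hroot hdepth0 hdepth hnn (depth (par x)) (par x) rfl).ne'
      (hFne _ _)
    have hsFpos : 0 < sF := ENNReal.toReal_pos
      (S16.Fhit_par_pos' hdepth hnn hx).ne' (hFne _ _)
    have hqpos : 0 < q := ENNReal.toReal_pos
      (S16.Fhit_par_pos hdepth hnn hx).ne' (hFne _ _)
    have hq1 : q < 1 := by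
      have h := (ENNReal.toReal_lt_toReal (hFne x (par x)) ENNReal.one_ne_top).mpr (hF x hx)
      simpa using h
    have hsF1 : sF ≤ 1 := by
      have h := (ENNReal.toReal_le_toReal (hFne (par x) x) ENNReal.one_ne_top).mpr
        (hFle (par x) x)
      simpa using h
    have hsq1 : sF * q < 1 :=
      (mul_le_of_le_one_left hqpos.le hsF1).trans_lt hq1
    have hFox : (Fhit p root x).toReal = u * sF := by
      rw [S16.Fhit_decomp_x hroot hdepth0 hdepth hnn hx
        (S16.root_not_inB hroot hdepth0 hdepth hx), ENNReal.toReal_mul]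
    have hFxo : (Fhit p x root).toReal = q * v := by
      rw [S16.Fhit_decomp_root hroot hdepth0 hdepth hnn hx (S16.inB_self x),
        ENNReal.toReal_mul]
    have hGx : (Grn p x root).toReal = q * v * g0 := by
      rw [S16.Grn_eq p x root, ENNReal.toReal_mul, hFxo]
    have hGw : (Grn p (par x) root).toReal = v * g0 := by
      rw [S16.Grn_eq p (par x) root, ENNReal.toReal_mul]
    have hνx : (ν (branchEnds root par x)).toReal = u * sF * (1 - q) / (1 - sF * q) := by
      rw [hν x hx, ENNReal.toReal_div, ENNReal.toReal_mul,
        ENNReal.toReal_sub_of_le (hFle x (par x)) ENNReal.one_ne_top,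
        ENNReal.toReal_sub_of_le (mul_le_one' (hFle (par x) x) (hFle x (par x)))
          ENNReal.one_ne_top,
        ENNReal.toReal_mul, ENNReal.toReal_one, hFox]
    have hφw : φ (par x) = v * g0 := by rw [hIH, hGw]
    rw [hFox, hFxo, hνx, hφw] at hkey
    have hg0 : g0 ≠ 0 := hGpos.ne'
    have hu0 : u ≠ 0 := hu.ne'
    have hv0 : v ≠ 0 := hv.ne'
    have hsF0 : sF ≠ 0 := hsFpos.ne'
    have hq0 : q ≠ 0 := hqpos.ne'
    have h1q : (1 : ℝ) - q ≠ 0 := by linarith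
    have h1sq : (1 : ℝ) - sF * q ≠ 0 := by linarith
    have hid2 : (1 / (q * v * g0) - 1 / (v * g0)) * (u * sF * (1 - q) / (1 - sF * q))⁻¹
        = 1 / (g0 * (u * sF) * (q * v)) - 1 / (g0 * u * v) := by
      field_simp
    have hcan := hkey.trans hid2.symm
    have hνne : (u * sF * (1 - q) / (1 - sF * q))⁻¹ ≠ 0 := by
      apply inv_ne_zero
      apply div_ne_zero
      · exact mul_ne_zero (mul_ne_zero hu0 hsF0) h1q
      · exact h1sq
    have hcan2 := mul_right_cancel₀ hνne hcan
    have h3 : 1 / φ x = 1 / (q * v * g0) := by linarith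
    rw [one_div, one_div] at h3
    rw [hGx]
    exact inv_injective h3
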